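/- (Factorization Theorem) Let l : ℝ → ℝ be a-linear-odd, i.e., l(x) - l(-x) = 2ax for all x. Let S = ((x_1,y_1),…,(x_m,y_m)) be a finite sample with x_i ∈ ℝ^d, y_i ∈ {-1,1}, and θ ∈ ℝ^d. Then (1/m) ∑_i l(y_i ⟨θ, x_i⟩) = (1/(2m)) ∑_i (l(⟨θ, x_i⟩) + l(-⟨θ, x_i⟩)) + a ⟨θ, μ_S⟩, where μ_S = (1/m) ∑_i y_i x_i is the mean operator. -/

import Mathlib

theorem factorization_theorem {d m : ℕ} (hm : 1 ≤ m)
    (l : ℝ → ℝ) (a : ℝ) (hl : ∀ x, l x - l (-x) = 2 * a * x)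
    (x : Fin m → EuclideanSpace ℝ (Fin d)) (y : Fin m → ℝ)
    (hy : ∀ i, y i = 1 ∨ y i = -1)
    (θ : EuclideanSpace ℝ (Fin d))
    (μ : EuclideanSpace ℝ (Fin d))
    (hμ : μ = (m : ℝ)⁻¹ • ∑ i, y i • x i) :
    (1 / (m : ℝ)) * ∑ i, l (y i * (inner ℝ θ (x i) : ℝ))
      = (1 / (2 * (m : ℝ))) * ∑ i, (l (inner ℝ θ (x i) : ℝ) + l (-(inner ℝ θ (x i) : ℝ)))
        + a * (inner ℝ θ μ : ℝ) := by
  have hm0 : (m : ℝ) ≠ 0 := by positivity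
  have hkey : ∀ i, l (y i * (inner ℝ θ (x i) : ℝ))
      = (l (inner ℝ θ (x i) : ℝ) + l (-(inner ℝ θ (x i) : ℝ))) / 2
        + a * (y i * (inner ℝ θ (x i) : ℝ)) := by
    intro i
    rcases hy i with h | h <;> rw [h] <;>
      [have := hl ((inner ℝ θ (x i) : ℝ)); have := hl (-(inner ℝ θ (x i) : ℝ))] <;>
      push_cast at this ⊢ <;> ring_nf at this ⊢ <;> linarith
  have hinner : (inner ℝ θ μ : ℝ) = (m : ℝ)⁻¹ * ∑ i, y i * (inner ℝ θ (x i) : ℝ) := by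
    rw [hμ, inner_smul_right, inner_sum]
    simp [inner_smul_right]
  rw [hinner]
  simp only [hkey, Finset.sum_add_distrib, Finset.mul_sum, ← Finset.sum_div]
  rw [show (∑ i : Fin m, a * ((↑m)⁻¹ * (y i * (inner ℝ θ (x i):ℝ)))) = (↑m)⁻¹ * ∑ i : Fin m, a * (y i * (inner ℝ θ (x i):ℝ)) by rw [Finset.mul_sum]; exact Finset.sum_congr rfl fun i _ => by ring]
  generalize (∑ x_1 : Fin m, l ((inner ℝ θ (x x_1):ℝ))) = A
  generalize (∑ x_1 : Fin m, l (-(inner ℝ θ (x x_1):ℝ))) = B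
  generalize (∑ x_1 : Fin m, a * (y x_1 * (inner ℝ θ (x x_1):ℝ))) = C
  field_simp
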